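/- Let A be an infinite alphabet and f̃ : A^{M+2} → {0,1} with M ≥ 1. Suppose (1) there exist x_1,…,x_M ∈ A and infinitely many x_{M+1} ∈ A such that all M+2 cyclic rotations of the word x_1⋯x_M x_{M+1} x_1 (i.e., f̃(x_1,…,x_{M+1},x_1) = f̃(x_2,…,x_{M+1},x_1,x_2) = ⋯ = f̃(x_{M+1},x_1,…,x_{M+1}) = 1) hold, and (2) for every (x_1,…,x_{M+1}) ∈ A^{M+1}, only finitely many x_{M+2} ∈ A satisfy f̃(x_1,…,x_{M+2}) = 1. Then the (M+1)-step shift space X_f determined by forbidding words w of length M+2 with f̃(w) = 0 is not conjugate to any M-step shift space over any alphabet. -/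

import Mathlib

open Set Filter Topology

/-- Elements of the full shift `Σ_A`: `Option`-valued sequences that stay `none`
once they are `none` (so they are either everywhere-defined infinite sequences,
or finite words followed by `none`s; the empty word is the all-`none` sequence). -/
def IsWordFun {A : Type*} (x : ℕ → Option A) : Prop :=
  ∀ m n : ℕ, m ≤ n → x m = none → x n = none

/-- The full shift `Σ_A = A^ℕ ∪ {finite words over A}`. -/
def FullShift (A : Type*) : Type _ := {x : ℕ → Option A // IsWordFun x}

namespace FullShift

variable {A B : Type*}

/-- The length of an element of the full shift, in `ℕ∞`. -/
noncomputable def len (x : FullShift A) : ℕ∞ :=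
  sInf {n : ℕ∞ | ∃ m : ℕ, n = (m : ℕ∞) ∧ x.1 m = none}

/-- The shift map `σ`, deleting the first letter. -/
def shift (x : FullShift A) : FullShift A :=
  ⟨fun n => x.1 (n + 1), fun m n h hm => x.2 (m + 1) (n + 1) (by omega) hm⟩

/-- The empty word `∅`. -/
def emptyWord : FullShift A := ⟨fun _ => none, fun _ _ _ _ => rfl⟩

/-- The finite word determined by a list. -/
def word (l : List A) : FullShift A :=
  ⟨fun n => l[n]?, by
    intro m n h hm
    rw [List.getElem?_eq_none_iff] at hm ⊢
    omega⟩

/-- The infinite sequence determined by a function `ℕ → A`. -/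
def infSeq (g : ℕ → A) : FullShift A :=
  ⟨fun n => some (g n), by intro m n _ hm; simp at hm⟩

/-- Generalized cylinder set `Z(w, F)`: elements beginning with the finite word `w`
whose next letter, if any, does not lie in the finite set `F`. -/
def Cyl (w : List A) (F : Finset A) : Set (FullShift A) :=
  {y | (∀ i < w.length, y.1 i = w[i]?) ∧ ∀ a ∈ F, y.1 w.length ≠ some a}

/-- The topology on `Σ_A` generated by the generalized cylinder sets. -/
instance : TopologicalSpace (FullShift A) :=
  TopologicalSpace.generateFrom {S | ∃ (w : List A) (F : Finset A), S = Cyl w F}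

/-- A shift space: closed, shift-invariant, with the infinite-extension property. -/
def IsShiftSpace (Λ : Set (FullShift A)) : Prop :=
  IsClosed Λ ∧ (∀ x ∈ Λ, shift x ∈ Λ) ∧
    ∀ x ∈ Λ, ∀ n : ℕ, len x = (n : ℕ∞) →
      {a : A | ∃ z ∈ Λ, (∀ i < n, z.1 i = x.1 i) ∧ z.1 n = some a}.Infinite

/-- `u` occurs as a subblock of `x`. -/
def Occurs (u : List A) (x : FullShift A) : Prop :=
  ∃ i : ℕ, ∀ j < u.length, x.1 (i + j) = u[j]?

/-- The infinite sequences avoiding every word in `Fb` as a subblock. -/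
def XinfL (Fb : Set (List A)) : Set (FullShift A) :=
  {x | (∀ n, x.1 n ≠ none) ∧ ∀ u ∈ Fb, ¬ Occurs u x}

/-- The shift space `X_F` determined by the forbidden words `Fb`: the infinite
sequences avoiding `Fb`, together with the finite words `x` such that for
infinitely many `a ∈ A` some extension `x a y` lies in `X_F^inf`. -/
def XL (Fb : Set (List A)) : Set (FullShift A) :=
  XinfL Fb ∪ {x | ∃ n : ℕ, len x = (n : ℕ∞) ∧
    {a : A | ∃ z ∈ XinfL Fb, (∀ i < n, z.1 i = x.1 i) ∧ z.1 n = some a}.Infinite}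

/-- The infinite sequences all of whose length-`N` windows `v` satisfy `ft v = true`
(i.e. avoiding all length-`N` words `w` with `ft w = 0`). -/
def XinfT {N : ℕ} (ft : (Fin N → A) → Bool) : Set (FullShift A) :=
  {x | (∀ n, x.1 n ≠ none) ∧
    ∀ (i : ℕ) (v : Fin N → A), (∀ j : Fin N, x.1 (i + (j : ℕ)) = some (v j)) → ft v = true}

/-- The shift space `X_f` determined by forbidding the length-`N` words `w`
with `ft w = 0`. -/
def XT {N : ℕ} (ft : (Fin N → A) → Bool) : Set (FullShift A) :=
  XinfT ft ∪ {x | ∃ n : ℕ, len x = (n : ℕ∞) ∧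
    {a : A | ∃ z ∈ XinfT ft, (∀ i < n, z.1 i = x.1 i) ∧ z.1 n = some a}.Infinite}

/-- `Y` is an `M`-step shift space: determined by forbidden words of length `M + 1`,
equivalently by a function `g̃ : B^{M+1} → {0,1}`. -/
def IsStepShift (M : ℕ) (Y : Set (FullShift B)) : Prop :=
  ∃ gt : (Fin (M + 1) → B) → Bool, Y = XT gt

/-- `φ` is a conjugacy from `Λ` onto `Y`: bijective, continuous, shift-commuting
and length-preserving. -/
def IsConjugacy (Λ : Set (FullShift A)) (Y : Set (FullShift B))
    (φ : FullShift A → FullShift B) : Prop :=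
  Set.BijOn φ Λ Y ∧ ContinuousOn φ Λ ∧
    (∀ x ∈ Λ, φ (shift x) = shift (φ x)) ∧ ∀ x ∈ Λ, len (φ x) = len x

/-- `Λ` and `Y` are conjugate shift spaces. -/
def Conjugate (Λ : Set (FullShift A)) (Y : Set (FullShift B)) : Prop :=
  ∃ φ : FullShift A → FullShift B, IsConjugacy Λ Y φ

/-- The periodic sequence `(x_1 ⋯ x_M b)^∞` of period `M + 1`. -/
def per (M : ℕ) (x : Fin M → A) (b : A) : ℕ → A :=
  fun n => if h : n % (M + 1) < M then x ⟨n % (M + 1), h⟩ else b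

end FullShift

section Helpers
namespace FullShift
variable {A : Type*}

lemma shift_iter_apply (k : ℕ) (x : FullShift A) (n : ℕ) :
    (shift^[k] x).1 n = x.1 (n + k) := by
  induction k generalizing x with
  | zero => rfl
  | succ k ih =>
    rw [Function.iterate_succ_apply, ih]
    rfl

lemma len_word (l : List A) : len (word l) = (l.length : ℕ∞) := by
  apply le_antisymm
  · apply sInf_le
    exact ⟨l.length, rfl, by simp [word]⟩
  · refine le_sInf ?_
    rintro n ⟨m, rfl, hm⟩
    have hm' : l[m]? = none := hm
    have : l.length ≤ m := by simpa [List.getElem?_eq_none_iff] using hm'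
    exact_mod_cast this

lemma len_infSeq (g : ℕ → A) : len (infSeq g) = ⊤ := by
  have h : {n : ℕ∞ | ∃ m : ℕ, n = (m : ℕ∞) ∧ (infSeq g).1 m = none} = ∅ := by
    apply Set.eq_empty_iff_forall_notMem.mpr
    rintro n ⟨m, rfl, hm⟩
    simp [infSeq] at hm
  rw [len, h, sInf_empty]

lemma len_eq_top {x : FullShift A} (h : ∀ n, x.1 n ≠ none) : len x = ⊤ := by
  have h' : {n : ℕ∞ | ∃ m : ℕ, n = (m : ℕ∞) ∧ x.1 m = none} = ∅ := by
    apply Set.eq_empty_iff_forall_notMem.mpr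
    rintro n ⟨m, rfl, hm⟩
    exact h m hm
  rw [len, h', sInf_empty]

lemma ne_none_of_lt_len {x : FullShift A} {i : ℕ} (h : (i : ℕ∞) < len x) : x.1 i ≠ none := by
  intro hn
  have : len x ≤ (i : ℕ∞) := sInf_le (by exact ⟨i, rfl, hn⟩)
  exact absurd this (not_le.mpr h)

lemma shift_mem_XinfT {N : ℕ} {ft : (Fin N → A) → Bool} {x : FullShift A}
    (h : x ∈ XinfT ft) : shift x ∈ XinfT ft := by
  refine ⟨fun n => h.1 (n + 1), fun i v hv => h.2 (i + 1) v fun j => ?_⟩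
  have he : i + 1 + (j : ℕ) = i + (j : ℕ) + 1 := by omega
  rw [he]
  exact hv j

lemma per_lt {M : ℕ} (x : Fin M → A) (b : A) {n : ℕ} (h : n < M) :
    per M x b n = x ⟨n, h⟩ := by
  have hm : n % (M + 1) = n := Nat.mod_eq_of_lt (by omega)
  simp only [per, hm]
  rw [dif_pos h]

lemma per_of_mod_lt {M : ℕ} (x : Fin M → A) (b : A) {n : ℕ} (h : n % (M + 1) < M) :
    per M x b n = x ⟨n % (M + 1), h⟩ := dif_pos h

lemma per_ge {M : ℕ} (x : Fin M → A) (b : A) {n : ℕ} (h : n % (M + 1) = M) :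
    per M x b n = b := by
  simp only [per, h]
  rw [dif_neg (lt_irrefl M)]

lemma per_M {M : ℕ} (x : Fin M → A) (b : A) : per M x b M = b :=
  per_ge x b (Nat.mod_eq_of_lt (by omega))

lemma per_period {M : ℕ} (x : Fin M → A) (b : A) (n : ℕ) :
    per M x b (n + (M + 1)) = per M x b n := by
  simp only [per, Nat.add_mod_right]

lemma ofFn_getElem? {n : ℕ} (f : Fin n → A) (i : ℕ) (h : i < n) :
    (List.ofFn f)[i]? = some (f ⟨i, h⟩) := by
  rw [List.getElem?_eq_getElem (by simpa using h)]
  simp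

lemma ofFn_getElem?_none {n : ℕ} (f : Fin n → A) (i : ℕ) (h : n ≤ i) :
    (List.ofFn f)[i]? = none := by
  rw [List.getElem?_eq_none_iff]
  simpa using h

end FullShift
end Helpers

/-- If `f̃ : A^{M+2} → {0,1}` satisfies conditions (1) and (2),
then the `(M+1)`-step shift `X_f` is not conjugate to any `M`-step shift space. -/
theorem stmt8 {A : Type*} [Infinite A] (M : ℕ) (hM : 1 ≤ M)
    (ft : (Fin (M + 2) → A) → Bool)
    (h1 : ∃ x : Fin M → A,
      {b : A | ∀ i : ℕ,
        ft (fun j : Fin (M + 2) => FullShift.per M x b (i + (j : ℕ))) = true}.Infinite)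
    (h2 : ∀ v : Fin (M + 1) → A, {b : A | ft (Fin.snoc v b) = true}.Finite) :
    ∀ (B : Type*) [Infinite B] (Y : Set (FullShift B)),
      FullShift.IsStepShift M Y → ¬ FullShift.Conjugate (FullShift.XT ft) Y := by
  intro B _ Y hY hconj
  classical
  obtain ⟨gt, rfl⟩ := hY
  obtain ⟨φ, hbij, hcont, hshift, hlen⟩ := hconj
  obtain ⟨xw, hI⟩ := h1
  set I : Set A := {b : A | ∀ i : ℕ,
      ft (fun j : Fin (M + 2) => FullShift.per M xw b (i + (j : ℕ))) = true} with hIdef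
  have hpseqA : ∀ (b : A) (n : ℕ),
      (FullShift.infSeq (FullShift.per M xw b)).1 n = some (FullShift.per M xw b n) :=
    fun _ _ => rfl
  set pseq : A → FullShift A := fun b => FullShift.infSeq (FullShift.per M xw b) with hpseq
  -- Step A : periodic points lie in the infinite part
  have hA : ∀ b ∈ I, pseq b ∈ FullShift.XinfT ft := by
    intro b hb
    refine ⟨fun n => by simp [hpseq, FullShift.infSeq], ?_⟩
    intro i v hv
    have hveq : v = fun j : Fin (M + 2) => FullShift.per M xw b (i + (j : ℕ)) := by
      funext j
      exact (Option.some.inj (hv j)).symm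
    rw [hveq]
    exact hb i
  have hΛ : ∀ b ∈ I, pseq b ∈ FullShift.XT ft := fun b hb => Or.inl (hA b hb)
  set xword : FullShift A := FullShift.word (List.ofFn xw) with hxword
  have hxw_apply : ∀ (i : ℕ) (h : i < M), xword.1 i = some (xw ⟨i, h⟩) :=
    fun i h => FullShift.ofFn_getElem? xw i h
  have hxw_none : ∀ i, M ≤ i → xword.1 i = none :=
    fun i h => FullShift.ofFn_getElem?_none xw i h
  have hpseq_lt : ∀ (b : A) (i : ℕ) (h : i < M), (pseq b).1 i = some (xw ⟨i, h⟩) := by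
    intro b i h
    rw [hpseqA, FullShift.per_lt xw b h]
  have hpseq_M : ∀ b : A, (pseq b).1 M = some b := by
    intro b
    rw [hpseqA, FullShift.per_M]
  -- Step B : the word x ∈ X_f
  have hxmem : xword ∈ FullShift.XT ft := by
    right
    refine ⟨M, by rw [hxword, FullShift.len_word]; simp, ?_⟩
    apply hI.mono
    intro b hb
    exact ⟨pseq b, hA b hb,
      fun i hi => (hpseq_lt b i hi).trans (hxw_apply i hi).symm, hpseq_M b⟩
  -- Step C : the image word y and its letters d
  have hylen : FullShift.len (φ xword) = (M : ℕ∞) := by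
    rw [hlen xword hxmem, hxword, FullShift.len_word]; simp
  haveI : Nonempty B := inferInstance
  set d : Fin M → B := fun i => ((φ xword).1 (i : ℕ)).getD (Classical.arbitrary B) with hd
  have hyd : ∀ i : Fin M, (φ xword).1 (i : ℕ) = some (d i) := by
    intro i
    have hne : (φ xword).1 (i : ℕ) ≠ none :=
      FullShift.ne_none_of_lt_len (by rw [hylen]; exact_mod_cast i.2)
    cases h : (φ xword).1 (i : ℕ) with
    | none => exact absurd h hne
    | some e => simp [hd, h]
  -- Step D : topology; cofinitely many p_b land in any open set around xword
  have hgen : ∀ O : Set (FullShift A), IsOpen O → xword ∈ O →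
      ∃ G : Finset A, ∀ b ∈ I, b ∉ G → pseq b ∈ O := by
    intro O hO
    have hO' : TopologicalSpace.GenerateOpen
        {S | ∃ (w : List A) (F : Finset A), S = FullShift.Cyl w F} O := hO
    clear hO
    induction hO' with
    | basic s hs =>
      intro hxs
      obtain ⟨w, F, rfl⟩ := hs
      have hwM : w.length ≤ M := by
        by_contra hw
        push_neg at hw
        have h3 := hxs.1 M hw
        rw [hxw_none M le_rfl, List.getElem?_eq_getElem hw] at h3
        exact (Option.some_ne_none _ h3.symm)
      refine ⟨F, fun b hb hbF => ⟨?_, ?_⟩⟩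
      · intro i hi
        rw [hpseq_lt b i (lt_of_lt_of_le hi hwM), ← hxs.1 i hi,
          hxw_apply i (lt_of_lt_of_le hi hwM)]
      · intro a haF
        rcases eq_or_lt_of_le hwM with heq | hlt
        · rw [heq, hpseq_M b]
          intro hcon
          exact hbF (by rwa [← Option.some.inj hcon] at haF)
        · have h4 := hxs.2 a haF
          rw [hxw_apply w.length hlt] at h4
          rw [hpseq_lt b w.length hlt]
          exact h4
    | univ => exact fun _ => ⟨∅, fun b _ _ => trivial⟩
    | inter s t _ _ ihs iht =>
      intro hx
      obtain ⟨G1, hG1⟩ := ihs hx.1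
      obtain ⟨G2, hG2⟩ := iht hx.2
      refine ⟨G1 ∪ G2, fun b hb hbG => ?_⟩
      rw [Finset.mem_union] at hbG
      push_neg at hbG
      exact ⟨hG1 b hb hbG.1, hG2 b hb hbG.2⟩
    | sUnion S _ ih =>
      intro hx
      obtain ⟨t, htS, hxt⟩ := hx
      obtain ⟨G, hG⟩ := ih t htS hxt
      exact ⟨G, fun b hb hbG => ⟨t, htS, hG b hb hbG⟩⟩
  have hUopen : IsOpen (FullShift.Cyl (List.ofFn d) (∅ : Finset B)) :=
    TopologicalSpace.GenerateOpen.basic _ ⟨List.ofFn d, ∅, rfl⟩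
  have hyU : φ xword ∈ FullShift.Cyl (List.ofFn d) (∅ : Finset B) := by
    constructor
    · intro i hi
      simp only [List.length_ofFn] at hi
      rw [FullShift.ofFn_getElem? d i hi]
      exact hyd ⟨i, hi⟩
    · simp
  have hpreU := (hcont xword hxmem).preimage_mem_nhdsWithin
    (hUopen.mem_nhds hyU)
  rw [mem_nhdsWithin] at hpreU
  obtain ⟨O, hOopen, hxO, hOsub⟩ := hpreU
  obtain ⟨G, hG⟩ := hgen O hOopen hxO
  set I' : Set A := I \ ↑G with hI'
  have hI'inf : I'.Infinite := hI.diff G.finite_toSet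
  have hI'I : I' ⊆ I := Set.diff_subset
  have hqU : ∀ b ∈ I', φ (pseq b) ∈ FullShift.Cyl (List.ofFn d) (∅ : Finset B) := by
    intro b hb
    exact hOsub ⟨hG b hb.1 (by simpa using hb.2), hΛ b hb.1⟩
  -- Step E : the images are periodic with period M+1
  have hqtop : ∀ b ∈ I, FullShift.len (φ (pseq b)) = ⊤ := fun b hb =>
    (hlen _ (hΛ b hb)).trans (FullShift.len_infSeq _)
  have hqY : ∀ b ∈ I, φ (pseq b) ∈ FullShift.XinfT gt := by
    intro b hb
    rcases hbij.mapsTo (hΛ b hb) with h | h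
    · exact h
    · obtain ⟨n, hn, -⟩ := h
      rw [hqtop b hb] at hn
      exact absurd hn (by simp)
  have hper_iter : ∀ (k : ℕ) (z : FullShift A), z ∈ FullShift.XinfT ft →
      FullShift.shift^[k] z ∈ FullShift.XinfT ft ∧
        φ (FullShift.shift^[k] z) = FullShift.shift^[k] (φ z) := by
    intro k
    induction k with
    | zero => exact fun z hz => ⟨hz, rfl⟩
    | succ k ih =>
      intro z hz
      have h1 := FullShift.shift_mem_XinfT hz
      obtain ⟨h2, h3⟩ := ih (FullShift.shift z) h1
      constructor
      · rw [Function.iterate_succ_apply]; exact h2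
      · rw [Function.iterate_succ_apply, h3, hshift z (Or.inl hz),
          ← Function.iterate_succ_apply]
  have hp_per : ∀ b : A, FullShift.shift^[M + 1] (pseq b) = pseq b := by
    intro b
    apply Subtype.ext; funext n
    rw [FullShift.shift_iter_apply, hpseqA, hpseqA, FullShift.per_period]
  have hq_per : ∀ b ∈ I, ∀ n : ℕ,
      (φ (pseq b)).1 (n + (M + 1)) = (φ (pseq b)).1 n := by
    intro b hb n
    have h3 := (hper_iter (M + 1) (pseq b) (hA b hb)).2
    rw [hp_per b] at h3
    calc (φ (pseq b)).1 (n + (M + 1))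
        = (FullShift.shift^[M + 1] (φ (pseq b))).1 n :=
          (FullShift.shift_iter_apply _ _ _).symm
      _ = (φ (pseq b)).1 n := by rw [← h3]
  set c : A → B := fun b => ((φ (pseq b)).1 M).getD (Classical.arbitrary B) with hc
  have hcb : ∀ b ∈ I, (φ (pseq b)).1 M = some (c b) := by
    intro b hb
    have hne : (φ (pseq b)).1 M ≠ none := by
      apply FullShift.ne_none_of_lt_len
      rw [hqtop b hb]
      exact WithTop.coe_lt_top M
    cases h : (φ (pseq b)).1 M with
    | none => exact absurd h hne
    | some e => simp [hc, h]
  have hq_eq : ∀ b ∈ I', φ (pseq b) = FullShift.infSeq (FullShift.per M d (c b)) := by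
    intro b hb
    apply Subtype.ext; funext n
    show (φ (pseq b)).1 n = some (FullShift.per M d (c b) n)
    induction n using Nat.strong_induction_on with
    | _ n ih =>
      rcases lt_trichotomy n M with h | h | h
      · have h5 := (hqU b hb).1 n (by simpa using h)
        rw [FullShift.ofFn_getElem? d n h] at h5
        rw [h5, FullShift.per_lt d (c b) h]
      · subst h
        rw [hcb b (hI'I hb), FullShift.per_M]
      · have hn : n - (M + 1) + (M + 1) = n := by omega
        rw [← hn, hq_per b (hI'I hb), ih (n - (M + 1)) (by omega),
          FullShift.per_period]
  have hinj : Set.InjOn c I' := by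
    intro b hb b' hb' hcc
    have h1 : φ (pseq b) = φ (pseq b') := by
      rw [hq_eq b hb, hq_eq b' hb', hcc]
    have h2 : pseq b = pseq b' :=
      hbij.injOn (hΛ b (hI'I hb)) (hΛ b' (hI'I hb')) h1
    have h3 := congrArg (fun z : FullShift A => z.1 M) h2
    simp only [hpseq_M] at h3
    exact Option.some.inj h3
  set C : Set B := c '' I' with hC
  have hCinf : C.Infinite := (Set.infinite_image_iff hinj).mpr hI'inf
  have hCmem : ∀ e ∈ C, FullShift.infSeq (FullShift.per M d e) ∈ FullShift.XinfT gt := by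
    rintro e ⟨b, hb, rfl⟩
    rw [← hq_eq b hb]
    exact hqY b (hI'I hb)
  obtain ⟨c0, hc0⟩ := hCinf.nonempty
  -- arithmetic helpers
  have huniq : ∀ i n p : ℕ, i ≤ n → n ≤ i + M → i ≤ p → p ≤ i + M →
      n % (M + 1) = M → p % (M + 1) = M → n = p := by
    intro i n p h1 h2 h3 h4 h5 h6
    have hn := Nat.div_add_mod n (M + 1)
    have hp := Nat.div_add_mod p (M + 1)
    rw [h5] at hn
    rw [h6] at hp
    have hae : n / (M + 1) = p / (M + 1) := by
      have k1 : n / (M + 1) ≤ p / (M + 1) := by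
        by_contra hlt
        push_neg at hlt
        have h7 : p / (M + 1) + 1 ≤ n / (M + 1) := hlt
        have h8 : (M + 1) * (p / (M + 1) + 1) ≤ (M + 1) * (n / (M + 1)) :=
          Nat.mul_le_mul_left _ h7
        rw [Nat.mul_succ] at h8
        linarith
      have k2 : p / (M + 1) ≤ n / (M + 1) := by
        by_contra hlt
        push_neg at hlt
        have h7 : n / (M + 1) + 1 ≤ p / (M + 1) := hlt
        have h8 : (M + 1) * (n / (M + 1) + 1) ≤ (M + 1) * (p / (M + 1)) :=
          Nat.mul_le_mul_left _ h7
        rw [Nat.mul_succ] at h8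
        linarith
      omega
    rw [← hn, ← hp, hae]
  have hsmall : ∀ i : ℕ, i % (M + 1) = M → i < 2 * M + 1 → i = M := by
    intro i hmod hlt
    have hi := Nat.div_add_mod i (M + 1)
    rw [hmod] at hi
    have hq : i / (M + 1) = 0 := by
      by_contra h
      have h7 : 1 ≤ i / (M + 1) := Nat.pos_of_ne_zero h
      have h8 : (M + 1) * 1 ≤ (M + 1) * (i / (M + 1)) := Nat.mul_le_mul_left _ h7
      linarith
    rw [hq, Nat.mul_zero] at hi
    omega
  have hp_mod : ∀ i : ℕ, (i + (M - i % (M + 1))) % (M + 1) = M := by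
    intro i
    have h1 : i % (M + 1) < M + 1 := Nat.mod_lt _ (by omega)
    have h2 := Nat.div_add_mod i (M + 1)
    have h3 : i + (M - i % (M + 1)) = (M + 1) * (i / (M + 1)) + M := by omega
    rw [h3, Nat.mul_add_mod]
    exact Nat.mod_eq_of_lt (by omega)
  -- the mixed sequences
  set mix : B → ℕ → B := fun e n =>
    FullShift.per M d (if n % (2 * (M + 1)) = M then c0 else e) n with hmix
  have hmixwin : ∀ e ∈ C, ∀ (i : ℕ) (v : Fin (M + 1) → B),
      (∀ j : Fin (M + 1), mix e (i + (j : ℕ)) = v j) → gt v = true := by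
    intro e he i v hv
    have hrM : i % (M + 1) < M + 1 := Nat.mod_lt _ (by omega)
    set p : ℕ := i + (M - i % (M + 1)) with hpdef
    have hpmod : p % (M + 1) = M := hp_mod i
    obtain ⟨e'', he''C, he''eq⟩ :
        ∃ e'', e'' ∈ C ∧ (if p % (2 * (M + 1)) = M then c0 else e) = e'' :=
      ⟨_, by split <;> [exact hc0; exact he], rfl⟩
    have hkey : ∀ j : Fin (M + 1),
        FullShift.per M d e'' (i + (j : ℕ)) = mix e (i + (j : ℕ)) := by
      intro j
      by_cases hlt : (i + (j : ℕ)) % (M + 1) < M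
      · simp only [hmix]
        rw [FullShift.per_of_mod_lt d e'' hlt, FullShift.per_of_mod_lt d _ hlt]
      · have hM' : (i + (j : ℕ)) % (M + 1) = M := by
          have := Nat.mod_lt (i + (j : ℕ)) (y := M + 1) (by omega)
          omega
        have hip : i + (j : ℕ) = p := by
          refine huniq i (i + (j : ℕ)) p (by omega) (by have := j.2; omega)
            (by omega) (by omega) hM' hpmod
        rw [hip]
        simp only [hmix]
        rw [FullShift.per_ge d e'' hpmod, FullShift.per_ge d _ hpmod, he''eq]
    have hz := (hCmem e'' he''C).2 i v ?_
    · exact hz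
    · intro j
      show some (FullShift.per M d e'' (i + (j : ℕ))) = some (v j)
      rw [hkey j, hv j]
  have hmix_lt : ∀ e : B, ∀ i < 2 * M + 1, mix e i = mix c0 i := by
    intro e i hi
    by_cases hlt : i % (M + 1) < M
    · simp only [hmix]
      rw [FullShift.per_of_mod_lt d _ hlt, FullShift.per_of_mod_lt d _ hlt]
    · have hiM : i % (M + 1) = M := by
        have := Nat.mod_lt i (y := M + 1) (by omega)
        omega
      have hieq : i = M := hsmall i hiM hi
      rw [hieq]
      have hMM : M % (M + 1) = M := Nat.mod_eq_of_lt (by omega)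
      have hmod2 : M % (2 * (M + 1)) = M := Nat.mod_eq_of_lt (by omega)
      simp only [hmix]
      rw [FullShift.per_ge d _ hMM, FullShift.per_ge d _ hMM, if_pos hmod2,
        if_pos hmod2]
  have hmix_end : ∀ e : B, mix e (2 * M + 1) = e := by
    intro e
    have h1 : (2 * M + 1) % (M + 1) = M := by
      have : 2 * M + 1 = (M + 1) * 1 + M := by ring
      rw [this, Nat.mul_add_mod]
      exact Nat.mod_eq_of_lt (by omega)
    have h2 : (2 * M + 1) % (2 * (M + 1)) = 2 * M + 1 := Nat.mod_eq_of_lt (by omega)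
    simp only [hmix]
    rw [FullShift.per_ge d _ h1]
    simp only [h2]
    rw [if_neg (by omega : ¬ 2 * M + 1 = M)]
  -- the long word W of length 2M+1 lies in Y
  set W : List B := List.ofFn (fun i : Fin (2 * M + 1) => mix c0 (i : ℕ)) with hW
  have hWlen : W.length = 2 * M + 1 := by simp [hW]
  have hWmem : FullShift.word W ∈ FullShift.XT gt := by
    right
    refine ⟨2 * M + 1, by rw [FullShift.len_word, hWlen], ?_⟩
    apply hCinf.mono
    intro e he
    refine ⟨FullShift.infSeq (mix e), ?_, ?_, ?_⟩
    · refine ⟨fun n => by simp [FullShift.infSeq], ?_⟩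
      intro i v hv
      exact hmixwin e he i v fun j => Option.some.inj (hv j)
    · intro i hi
      show some (mix e i) = W[i]?
      rw [hmix_lt e i hi, hW, FullShift.ofFn_getElem? _ i (by omega)]
    · show some (mix e (2 * M + 1)) = some e
      rw [hmix_end e]
  -- Step G : pull W back to X_f and contradict condition (2)
  obtain ⟨u, hu, hφu⟩ := hbij.surjOn hWmem
  have hulen : FullShift.len u = ((2 * M + 1 : ℕ) : ℕ∞) := by
    rw [← hlen u hu, hφu, FullShift.len_word, hWlen]
  have huent : ∀ i < 2 * M + 1, u.1 i ≠ none := by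
    intro i hi
    apply FullShift.ne_none_of_lt_len
    rw [hulen]
    exact_mod_cast hi
  rcases hu with huinf | ⟨n, hn, hext⟩
  · have htop := FullShift.len_eq_top huinf.1
    rw [hulen] at htop
    exact ENat.coe_ne_top _ htop
  · have hn' : n = 2 * M + 1 := by
      rw [hulen] at hn
      exact_mod_cast hn.symm
    subst hn'
    haveI : Nonempty A := inferInstance
    set v0 : Fin (M + 1) → A :=
      fun j => (u.1 (M + (j : ℕ))).getD (Classical.arbitrary A) with hv0
    have hv0s : ∀ j : Fin (M + 1), u.1 (M + (j : ℕ)) = some (v0 j) := by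
      intro j
      have hne := huent (M + (j : ℕ)) (by have := j.2; omega)
      cases h : u.1 (M + (j : ℕ)) with
      | none => exact absurd h hne
      | some a => simp [hv0, h]
    have hsub : {a : A | ∃ z ∈ FullShift.XinfT ft,
          (∀ i < 2 * M + 1, z.1 i = u.1 i) ∧ z.1 (2 * M + 1) = some a} ⊆
        {a : A | ft (Fin.snoc v0 a) = true} := by
      rintro a ⟨z, hz, hpre, hza⟩
      have hwin := hz.2 M (Fin.snoc v0 a) ?_
      · exact hwin
      · intro j
        refine Fin.lastCases ?_ ?_ j
        · rw [Fin.snoc_last]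
          have he : M + ((Fin.last (M + 1) : Fin (M + 2)) : ℕ) = 2 * M + 1 := by
            simp [Fin.last]
            omega
          rw [he]
          exact hza
        · intro i
          rw [Fin.snoc_castSucc]
          have he : M + ((Fin.castSucc i : Fin (M + 2)) : ℕ) = M + (i : ℕ) := rfl
          rw [he, hpre (M + (i : ℕ)) (by have := i.2; omega), hv0s i]
    exact absurd hext ((h2 v0).subset hsub).not_infinite
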